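/- The Fock-Goncharov triangle invariant satisfies the cyclic symmetry τ_{abc}(E, F, G) = τ_{cab}(G, E, F) for every maximum span flag triple (E, F, G) and every interior vertex (a, b, c) of Θ_n. -/

import Mathlib

/-- The wedge product `e^(a) ∧ f^(b) ∧ g^(c)` (with `c = n - a - b`) of the generators of the
exterior powers of the flag subspaces, computed as a determinant with respect to the basis `B`. -/
noncomputable def wDet {V : Type*} [AddCommGroup V] [Module ℂ V] {n : ℕ}
    (B : Module.Basis (Fin n) ℂ V) (e f g : ℕ → V) (a b : ℕ) : ℂ :=
  B.det (fun i : Fin n =>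
    if (i : ℕ) < a then e (i : ℕ)
    else if (i : ℕ) < a + b then f ((i : ℕ) - a)
    else g ((i : ℕ) - a - b))

/-- The Fock-Goncharov triangle invariant `τ_{abc}(E, F, G)` (with `c = n - a - b`), defined from
generating vectors `e, f, g` of the flags `E, F, G`. -/
noncomputable def triInv {V : Type*} [AddCommGroup V] [Module ℂ V] {n : ℕ}
    (B : Module.Basis (Fin n) ℂ V) (e f g : ℕ → V) (a b : ℕ) : ℂ :=
  (wDet B e f g (a - 1) (b + 1) / wDet B e f g (a + 1) (b - 1)) *
  (wDet B e f g a (b - 1) / wDet B e f g a (b + 1)) *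
  (wDet B e f g (a + 1) b / wDet B e f g (a - 1) b)

open Fin.NatCast in
lemma finRotate_pow_apply {m : ℕ} (k : ℕ) (i : Fin (m + 1)) :
    ((finRotate (m + 1)) ^ k) i = i + (k : Fin (m + 1)) := by
  induction k with
  | zero => simp
  | succ k ih =>
    rw [pow_succ', Equiv.Perm.mul_apply, ih, finRotate_succ_apply]
    push_cast
    rw [add_assoc]

open Fin.NatCast in
lemma wDet_cyclic {V : Type*} [AddCommGroup V] [Module ℂ V] {n : ℕ}
    (B : Module.Basis (Fin n) ℂ V) (e f g : ℕ → V) (a c : ℕ) (h : a + c ≤ n) (hn : 0 < n) :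
    wDet B g e f c a = (-1 : ℂ) ^ ((n - 1) * (n - c)) * wDet B e f g a (n - a - c) := by
  obtain ⟨m, rfl⟩ : ∃ m, n = m + 1 := ⟨n - 1, by omega⟩
  set σ : Equiv.Perm (Fin (m + 1)) := (finRotate (m + 1)) ^ (m + 1 - c) with hσ
  have happ : ∀ i : Fin (m + 1), (σ i : ℕ) = ((i : ℕ) + (m + 1 - c)) % (m + 1) := by
    intro i
    rw [hσ, finRotate_pow_apply, Fin.val_add, Fin.val_natCast]
    simp [Nat.add_mod]
  have hfun : (fun i : Fin (m + 1) =>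
      if (i : ℕ) < a then e (i : ℕ)
      else if (i : ℕ) < a + (m + 1 - a - c) then f ((i : ℕ) - a)
      else g ((i : ℕ) - a - (m + 1 - a - c))) ∘ σ = (fun i : Fin (m + 1) =>
      if (i : ℕ) < c then g (i : ℕ)
      else if (i : ℕ) < c + a then e ((i : ℕ) - c)
      else f ((i : ℕ) - c - a)) := by
    funext i
    have hi := i.isLt
    simp only [Function.comp_apply, happ i]
    rcases lt_or_ge (i : ℕ) c with h1 | h1
    · have hmod : ((i : ℕ) + (m + 1 - c)) % (m + 1) = (i : ℕ) + (m + 1 - c) :=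
        Nat.mod_eq_of_lt (by omega)
      rw [hmod, if_neg (by omega), if_neg (by omega), if_pos h1]
      congr 1
      omega
    · have hmod : ((i : ℕ) + (m + 1 - c)) % (m + 1) = (i : ℕ) - c := by
        have h2 : (i : ℕ) + (m + 1 - c) = ((i : ℕ) - c) + (m + 1) := by omega
        rw [h2, Nat.add_mod_right, Nat.mod_eq_of_lt (by omega)]
      rw [hmod]
      rcases lt_or_ge (i : ℕ) (c + a) with h2 | h2
      · rw [if_pos (show (i : ℕ) - c < a by omega), if_neg (by omega), if_pos h2]
      · rw [if_neg (show ¬ (i : ℕ) - c < a by omega),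
          if_pos (show (i : ℕ) - c < a + (m + 1 - a - c) by omega),
          if_neg (by omega), if_neg (by omega)]
  have hsign : Equiv.Perm.sign σ = (-1 : ℤˣ) ^ ((m + 1 - 1) * (m + 1 - c)) := by
    rw [hσ, map_pow, sign_finRotate, ← pow_mul]
  calc wDet B g e f c a = B.det ((fun i : Fin (m + 1) =>
      if (i : ℕ) < a then e (i : ℕ)
      else if (i : ℕ) < a + (m + 1 - a - c) then f ((i : ℕ) - a)
      else g ((i : ℕ) - a - (m + 1 - a - c))) ∘ σ) := by rw [hfun]; rfl
    _ = Equiv.Perm.sign σ • wDet B e f g a (m + 1 - a - c) := by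
        rw [AlternatingMap.map_perm]; rfl
    _ = (-1 : ℂ) ^ ((m + 1 - 1) * (m + 1 - c)) * wDet B e f g a (m + 1 - a - c) := by
        rw [hsign, Units.smul_def, zsmul_eq_mul]
        push_cast
        ring

theorem triangle_invariant_cyclic_symmetry {V : Type*} [AddCommGroup V] [Module ℂ V]
    (n : ℕ) (B : Module.Basis (Fin n) ℂ V) (e f g : ℕ → V)
    (hmax : ∀ a b, a + b ≤ n → wDet B e f g a b ≠ 0)
    (a b c : ℕ) (habc : a + b + c = n) (ha : 0 < a) (hb : 0 < b) (hc : 0 < c) :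
    triInv B e f g a b = triInv B g e f c a := by
  have hn : 0 < n := by omega
  have h1 := wDet_cyclic B e f g (a + 1) (c - 1) (by omega) hn
  have h2 := wDet_cyclic B e f g (a - 1) (c + 1) (by omega) hn
  have h3 := wDet_cyclic B e f g (a - 1) c (by omega) hn
  have h4 := wDet_cyclic B e f g (a + 1) c (by omega) hn
  have h5 := wDet_cyclic B e f g a (c + 1) (by omega) hn
  have h6 := wDet_cyclic B e f g a (c - 1) (by omega) hn
  rw [show n - (a + 1) - (c - 1) = b from by omega] at h1
  rw [show n - (a - 1) - (c + 1) = b from by omega] at h2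
  rw [show n - (a - 1) - c = b + 1 from by omega] at h3
  rw [show n - (a + 1) - c = b - 1 from by omega] at h4
  rw [show n - a - (c + 1) = b - 1 from by omega] at h5
  rw [show n - a - (c - 1) = b + 1 from by omega] at h6
  have hpq : (-1 : ℂ) ^ ((n - 1) * (n - (c - 1))) = (-1 : ℂ) ^ ((n - 1) * (n - (c + 1))) := by
    rw [show n - (c - 1) = (n - (c + 1)) + 2 from by omega, Nat.mul_add, pow_add,
      mul_comm (n - 1) 2, pow_mul]
    norm_num
  rw [hpq] at h1 h6
  have hs1 : (-1 : ℂ) ^ ((n - 1) * (n - (c + 1))) ≠ 0 := pow_ne_zero _ (by norm_num)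
  have hs2 : (-1 : ℂ) ^ ((n - 1) * (n - c)) ≠ 0 := pow_ne_zero _ (by norm_num)
  have W1 := hmax (a + 1) b (by omega)
  have W2 := hmax (a - 1) b (by omega)
  have W3 := hmax (a - 1) (b + 1) (by omega)
  have W4 := hmax (a + 1) (b - 1) (by omega)
  have W5 := hmax a (b - 1) (by omega)
  have W6 := hmax a (b + 1) (by omega)
  unfold triInv
  rw [h1, h2, h3, h4, h5, h6]
  field_simp
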